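/- arXiv:2009.09293 — 2 statements merged into one kernel-verified Lean document; each statement's English description precedes it below -/
import Mathlib

section
/- For every t with 0 < t < 1 and every real C with 0 < C < 1, the sum ∑_{n=1}^∞ n^{−2−C}·min{t²n², 1} is bounded above by a constant (depending only on C) times t^{1+C}. -/
set_option maxHeartbeats 800000

open Real Set

-- discrete-to-integral bound: ∑_{i<M} (x₀+i+1)^r ≤ ∫_{x₀}^{x₀+M} x^r when x₀ ≥ 1, r < 0
lemma sum_rpow_le_integral (x₀ : ℝ) (hx₀ : 1 ≤ x₀) (M : ℕ) (r : ℝ) (hr : r < 0) :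
    (∑ i ∈ Finset.range M, (x₀ + (i + 1 : ℕ)) ^ r) ≤ ∫ x in x₀..x₀ + M, x ^ r := by
  apply AntitoneOn.sum_le_integral (f := fun x => x ^ r)
  intro x hx y hy hxy
  exact Real.rpow_le_rpow_of_nonpos (lt_of_lt_of_le one_pos (hx₀.trans hx.1)) hxy hr.le

theorem sum_min_le_t_pow (C : ℝ) (hC0 : 0 < C) (hC1 : C < 1) :
    ∃ K : ℝ, 0 < K ∧ ∀ t : ℝ, 0 < t → t < 1 →
      (∑' n : ℕ+, (n : ℝ) ^ (-2 - C) * min (t ^ 2 * (n : ℝ) ^ 2) 1) ≤ K * t ^ (1 + C) := by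
  have h1C : 0 < 1 - C := by linarith
  refine ⟨2 / (1 - C) + 4, by positivity, ?_⟩
  intro t ht0 ht1
  set g : ℕ → ℝ := fun n => (n : ℝ) ^ (-2 - C) * min (t ^ 2 * (n : ℝ) ^ 2) 1 with hg
  have hg0 : g 0 = 0 := by
    simp [hg, Real.zero_rpow (by linarith : -2 - C ≠ 0)]
  have hgnonneg : ∀ n : ℕ, 0 ≤ g n := by
    intro n
    apply mul_nonneg (Real.rpow_nonneg (Nat.cast_nonneg n) _)
    exact le_min (by positivity) one_pos.le
  have hgle : ∀ n : ℕ, g n ≤ (n : ℝ) ^ (-2 - C) := by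
    intro n
    calc g n ≤ (n : ℝ) ^ (-2 - C) * 1 :=
        mul_le_mul_of_nonneg_left (min_le_right _ _) (Real.rpow_nonneg (Nat.cast_nonneg n) _)
      _ = (n : ℝ) ^ (-2 - C) := mul_one _
  have hsummaj : Summable (fun n : ℕ => (n : ℝ) ^ (-2 - C)) :=
    Real.summable_nat_rpow.mpr (by linarith)
  have hsum : Summable g := hsummaj.of_nonneg_of_le hgnonneg hgle
  -- convert PNat sum to Nat sum
  have hpnat : (∑' n : ℕ+, (n : ℝ) ^ (-2 - C) * min (t ^ 2 * (n : ℝ) ^ 2) 1) = ∑' n : ℕ, g n := by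
    have key : ∑' n : ℕ+, g n = ∑' n : ℕ, g n := by
      refine Function.Injective.tsum_eq (fun a b hab => PNat.coe_injective hab) ?_
      intro x hx
      match x with
      | 0 => exact absurd hg0 hx
      | (n+1) => exact ⟨⟨n+1, n.succ_pos⟩, rfl⟩
    rw [← key]
  rw [hpnat]
  -- split at N = ⌊1/t⌋
  set N : ℕ := ⌊1/t⌋₊ with hN
  have hN1 : 1 ≤ N := Nat.le_floor (by
    rw [Nat.cast_one, le_div_iff₀ ht0, one_mul]
    exact ht1.le)
  have hN0 : (0:ℝ) < N := by exact_mod_cast Nat.lt_of_lt_of_le Nat.zero_lt_one hN1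
  have hNle : (N : ℝ) ≤ 1 / t := Nat.floor_le (by positivity)
  have hNge : 1 / (2 * t) ≤ (N : ℝ) := by
    have h2 : 1 / t < (N : ℝ) + 1 := Nat.lt_floor_add_one _
    have h3 : (N : ℝ) + 1 ≤ 2 * N := by
      have : (1:ℝ) ≤ N := by exact_mod_cast hN1
      linarith
    rw [div_le_iff₀ (by positivity)]
    have h4 : 1 / t * t = 1 := div_mul_cancel₀ 1 ht0.ne'
    nlinarith [mul_le_mul_of_nonneg_right h2.le ht0.le,
      mul_le_mul_of_nonneg_right h3 ht0.le]
  rw [← Summable.sum_add_tsum_nat_add (N + 1) hsum]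
  have hpow : (0:ℝ) < t ^ (1 + C) := Real.rpow_pos_of_pos ht0 _
  -- head estimate
  have head : ∑ i ∈ Finset.range (N + 1), g i ≤ 2 / (1 - C) * t ^ (1 + C) := by
    have hterm : ∀ i : ℕ, g (i + 1) ≤ t ^ 2 * ((i + 1 : ℕ) : ℝ) ^ (-C) := by
      intro i
      have hipos : (0:ℝ) < ((i + 1 : ℕ) : ℝ) := by positivity
      have h1 : g (i + 1) ≤ ((i + 1 : ℕ) : ℝ) ^ (-2 - C) * (t ^ 2 * ((i + 1 : ℕ) : ℝ) ^ 2) :=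
        mul_le_mul_of_nonneg_left (min_le_left _ _) (Real.rpow_nonneg hipos.le _)
      have h2 : ((i + 1 : ℕ) : ℝ) ^ (-2 - C) * ((i + 1 : ℕ) : ℝ) ^ (2:ℕ) = ((i + 1 : ℕ) : ℝ) ^ (-C) := by
        rw [← Real.rpow_natCast ((i + 1 : ℕ) : ℝ) 2, ← Real.rpow_add hipos]
        congr 1
        push_cast
        ring
      calc g (i + 1) ≤ ((i + 1 : ℕ) : ℝ) ^ (-2 - C) * (t ^ 2 * ((i + 1 : ℕ) : ℝ) ^ 2) := h1
        _ = t ^ 2 * (((i + 1 : ℕ) : ℝ) ^ (-2 - C) * ((i + 1 : ℕ) : ℝ) ^ (2:ℕ)) := by ring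
        _ = t ^ 2 * ((i + 1 : ℕ) : ℝ) ^ (-C) := by rw [h2]
    have hsum1 : ∑ i ∈ Finset.range (N + 1), g i ≤
        t ^ 2 * ∑ i ∈ Finset.range N, ((i + 1 : ℕ) : ℝ) ^ (-C) := by
      rw [Finset.sum_range_succ', hg0, add_zero, Finset.mul_sum]
      exact Finset.sum_le_sum fun i _ => hterm i
    -- bound the inner sum by 2/(1-C) * N^(1-C)
    obtain ⟨M, hM⟩ : ∃ M, N = M + 1 := ⟨N - 1, (Nat.succ_pred_eq_of_pos hN1).symm⟩
    have hinner : ∑ i ∈ Finset.range N, ((i + 1 : ℕ) : ℝ) ^ (-C) ≤ 2 / (1 - C) * (N : ℝ) ^ (1 - C) := by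
      have hNC1 : (1:ℝ) ≤ (N : ℝ) ^ (1 - C) :=
        Real.one_le_rpow (by exact_mod_cast hN1) h1C.le
      have hsplit : ∑ i ∈ Finset.range N, ((i + 1 : ℕ) : ℝ) ^ (-C)
          = (∑ i ∈ Finset.range M, ((i + 1 + 1 : ℕ) : ℝ) ^ (-C)) + 1 := by
        rw [hM, Finset.sum_range_succ']
        norm_num
      have hint : (∑ i ∈ Finset.range M, ((i + 1 + 1 : ℕ) : ℝ) ^ (-C))
          ≤ ∫ x in (1:ℝ)..(1 + M : ℝ), x ^ (-C) := by
        have := sum_rpow_le_integral 1 le_rfl M (-C) (by linarith)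
        refine le_trans (le_of_eq ?_) this
        apply Finset.sum_congr rfl
        intro i _
        congr 1
        push_cast
        ring
      have hval : (∫ x in (1:ℝ)..(1 + M : ℝ), x ^ (-C))
          = ((1 + M : ℝ) ^ (-C + 1) - 1) / (-C + 1) := by
        rw [integral_rpow (Or.inl (by linarith)), Real.one_rpow]
      have hNM : (1 + M : ℝ) = (N : ℝ) := by rw [hM]; push_cast; ring
      have hbound : ((1 + M : ℝ) ^ (-C + 1) - 1) / (-C + 1) ≤ (N : ℝ) ^ (1 - C) / (1 - C) := by
        rw [hNM, show (-C + 1) = 1 - C by ring]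
        gcongr
        linarith
      have hfrac : 1 ≤ (N : ℝ) ^ (1 - C) / (1 - C) := by
        rw [le_div_iff₀ h1C]
        nlinarith
      have hkey : 2 / (1 - C) * (N : ℝ) ^ (1 - C)
          = (N : ℝ) ^ (1 - C) / (1 - C) + (N : ℝ) ^ (1 - C) / (1 - C) := by ring
      calc ∑ i ∈ Finset.range N, ((i + 1 : ℕ) : ℝ) ^ (-C)
          = (∑ i ∈ Finset.range M, ((i + 1 + 1 : ℕ) : ℝ) ^ (-C)) + 1 := hsplit
        _ ≤ (N : ℝ) ^ (1 - C) / (1 - C) + 1 :=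
            add_le_add_left ((hint.trans_eq hval).trans hbound) 1
        _ ≤ 2 / (1 - C) * (N : ℝ) ^ (1 - C) := by rw [hkey]; linarith
    calc ∑ i ∈ Finset.range (N + 1), g i
        ≤ t ^ 2 * ∑ i ∈ Finset.range N, ((i + 1 : ℕ) : ℝ) ^ (-C) := hsum1
      _ ≤ t ^ 2 * (2 / (1 - C) * (N : ℝ) ^ (1 - C)) := by
          apply mul_le_mul_of_nonneg_left hinner (by positivity)
      _ = 2 / (1 - C) * (t ^ 2 * (N : ℝ) ^ (1 - C)) := by ring
      _ ≤ 2 / (1 - C) * t ^ (1 + C) := by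
          apply mul_le_mul_of_nonneg_left ?_ (by positivity)
          have hNt : (N : ℝ) ^ (1 - C) ≤ (1 / t) ^ (1 - C) :=
            Real.rpow_le_rpow hN0.le hNle h1C.le
          have h1t : ((1:ℝ) / t) ^ (1 - C) = t ^ (C - 1) := by
            rw [one_div, Real.inv_rpow ht0.le, ← Real.rpow_neg ht0.le]
            ring_nf
          have ht2 : t ^ 2 * t ^ (C - 1) = t ^ (1 + C) := by
            rw [← Real.rpow_natCast t 2, ← Real.rpow_add ht0]
            congr 1
            push_cast
            ring
          calc t ^ 2 * (N : ℝ) ^ (1 - C) ≤ t ^ 2 * t ^ (C - 1) := by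
                rw [← h1t]; exact mul_le_mul_of_nonneg_left hNt (by positivity)
            _ = t ^ (1 + C) := ht2
  -- tail estimate
  have tail : (∑' i : ℕ, g (i + (N + 1))) ≤ 4 * t ^ (1 + C) := by
    have hsummaj' : Summable (fun i : ℕ => ((i + (N + 1) : ℕ) : ℝ) ^ (-2 - C)) :=
      (summable_nat_add_iff (f := fun n : ℕ => (n : ℝ) ^ (-2 - C)) (N + 1)).mpr hsummaj
    have step1 : (∑' i : ℕ, g (i + (N + 1))) ≤ ∑' i : ℕ, ((i + (N + 1) : ℕ) : ℝ) ^ (-2 - C) :=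
      Summable.tsum_le_tsum (fun i => hgle _) ((summable_nat_add_iff (f := g) (N + 1)).mpr hsum) hsummaj'
    have step2 : (∑' i : ℕ, ((i + (N + 1) : ℕ) : ℝ) ^ (-2 - C)) ≤ (N : ℝ) ^ (-1 - C) / (1 + C) := by
      apply Real.tsum_le_of_sum_range_le (fun i => Real.rpow_nonneg (Nat.cast_nonneg _) _)
      intro M
      have hsle := sum_rpow_le_integral (N : ℝ) (by exact_mod_cast hN1) M (-2 - C) (by linarith)
      have hcongr : ∑ i ∈ Finset.range M, ((i + (N + 1) : ℕ) : ℝ) ^ (-2 - C)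
          = ∑ i ∈ Finset.range M, ((N : ℝ) + ((i + 1 : ℕ) : ℝ)) ^ (-2 - C) := by
        apply Finset.sum_congr rfl
        intro i _
        congr 1
        push_cast
        ring
      have hval : (∫ x in (N : ℝ)..((N : ℝ) + M), x ^ (-2 - C))
          = (((N : ℝ) + M) ^ (-2 - C + 1) - (N : ℝ) ^ (-2 - C + 1)) / (-2 - C + 1) := by
        apply integral_rpow
        right
        refine ⟨by intro h; linarith, ?_⟩
        intro h
        rw [Set.mem_uIcc] at h
        have hM0 : (0:ℝ) ≤ (M:ℝ) := Nat.cast_nonneg M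
        rcases h with ⟨h1, _⟩ | ⟨h1, _⟩ <;> linarith
      have key : (((N:ℝ) + M) ^ (-2 - C + 1) - (N:ℝ) ^ (-2 - C + 1)) / (-2 - C + 1)
          ≤ (N : ℝ) ^ (-1 - C) / (1 + C) := by
        have h1pC : (0:ℝ) < 1 + C := by linarith
        rw [show (-2 - C + 1 : ℝ) = -(1 + C) from by ring,
          show (-1 - C : ℝ) = -(1 + C) from by ring,
          div_neg, ← neg_div, neg_sub]
        have hA : (0:ℝ) ≤ ((N:ℝ) + M) ^ (-(1 + C)) :=
          Real.rpow_nonneg (by positivity) _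
        gcongr
        linarith
      calc ∑ i ∈ Finset.range M, ((i + (N + 1) : ℕ) : ℝ) ^ (-2 - C)
          = ∑ i ∈ Finset.range M, ((N : ℝ) + ((i + 1 : ℕ) : ℝ)) ^ (-2 - C) := hcongr
        _ ≤ ∫ x in (N : ℝ)..((N : ℝ) + M), x ^ (-2 - C) := hsle
        _ = (((N:ℝ) + M) ^ (-2 - C + 1) - (N:ℝ) ^ (-2 - C + 1)) / (-2 - C + 1) := hval
        _ ≤ (N : ℝ) ^ (-1 - C) / (1 + C) := key
    have step3 : (N : ℝ) ^ (-1 - C) / (1 + C) ≤ 4 * t ^ (1 + C) := by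
      have hNinv : (N : ℝ) ^ (-1 - C) ≤ (1 / (2 * t)) ^ (-1 - C) :=
        Real.rpow_le_rpow_of_nonpos (by positivity) hNge (by linarith)
      have e1 : ((1 : ℝ) / (2 * t)) ^ (-1 - C) = (2 * t) ^ (1 + C) := by
        rw [one_div, Real.inv_rpow (by positivity), ← Real.rpow_neg (by positivity)]
        congr 1
        ring
      have e2 : (2 * t) ^ (1 + C) = (2:ℝ) ^ (1 + C) * t ^ (1 + C) :=
        Real.mul_rpow (by norm_num) ht0.le
      have e3 : (2:ℝ) ^ (1 + C) ≤ 4 := by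
        calc (2:ℝ) ^ (1 + C) ≤ (2:ℝ) ^ (2:ℝ) :=
            Real.rpow_le_rpow_of_exponent_le one_le_two (by linarith)
          _ = 4 := by
            rw [show (2:ℝ) = ((2:ℕ):ℝ) by norm_num, Real.rpow_natCast]
            norm_num
      calc (N : ℝ) ^ (-1 - C) / (1 + C) ≤ (N : ℝ) ^ (-1 - C) :=
          div_le_self (Real.rpow_nonneg hN0.le _) (by linarith)
        _ ≤ (2 * t) ^ (1 + C) := by rw [← e1]; exact hNinv
        _ = (2:ℝ) ^ (1 + C) * t ^ (1 + C) := e2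
        _ ≤ 4 * t ^ (1 + C) := mul_le_mul_of_nonneg_right e3 hpow.le
    exact step1.trans (step2.trans step3)
  calc ∑ i ∈ Finset.range (N + 1), g i + ∑' i : ℕ, g (i + (N + 1))
      ≤ 2 / (1 - C) * t ^ (1 + C) + 4 * t ^ (1 + C) := add_le_add head tail
    _ = (2 / (1 - C) + 4) * t ^ (1 + C) := by ring
end

section
/- Let d ≥ 3, ω ≥ 4 even, j an integer with 1 ≤ j ≤ d−1, and define α_j = (d−j)(1 − 2/ω) / min{1, 2(d−j)/ω}. If ω < 2d, then max{α_1, …, α_{d−1}} < d − 1. -/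
theorem alpha_lt_d_sub_one (d ω : ℕ) (hd : 3 ≤ d) (hω : 4 ≤ ω) (hωeven : Even ω)
    (hωd : ω < 2 * d) :
    ∀ j : ℕ, 1 ≤ j → j ≤ d - 1 →
      ((d : ℝ) - j) * (1 - 2 / ω) / min 1 (2 * ((d : ℝ) - j) / ω) < (d : ℝ) - 1 := by
  intro j hj1 hj2
  have hjd : (j : ℝ) ≤ (d : ℝ) - 1 := by
    have : j ≤ d - 1 := hj2
    have h' : (j : ℝ) ≤ ((d - 1 : ℕ) : ℝ) := by exact_mod_cast this
    have : ((d - 1 : ℕ) : ℝ) = (d : ℝ) - 1 := by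
      have : 1 ≤ d := by omega
      push_cast [this]; ring
    linarith [h', this.le]
  have ha : (1 : ℝ) ≤ (d : ℝ) - j := by linarith
  have hj1R : (1 : ℝ) ≤ (j : ℝ) := by exact_mod_cast hj1
  have hωR : (4 : ℝ) ≤ (ω : ℝ) := by exact_mod_cast hω
  have hωdR : (ω : ℝ) < 2 * d := by exact_mod_cast hωd
  have hω0 : (ω : ℝ) ≠ 0 := by positivity
  have h2ω : 2 / (ω : ℝ) < 1 := by
    rw [div_lt_one (by linarith)]; linarith
  have h2ω0 : 0 < 2 / (ω : ℝ) := by positivity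
  set a : ℝ := (d : ℝ) - j with haa
  rcases le_or_gt 1 (2 * a / ω) with h | h
  · rw [min_eq_left h, div_one]
    have : a * (1 - 2 / ω) < a * 1 := by
      apply mul_lt_mul_of_pos_left (by linarith) (by linarith)
    linarith
  · rw [min_eq_right h.le]
    have ha0 : a ≠ 0 := by linarith
    have key : a * (1 - 2 / ω) / (2 * a / ω) = ((ω : ℝ) - 2) / 2 := by
      field_simp
    rw [key]
    linarith
end
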